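/- Let r ≥ 2 and let y be the positive unit Perron eigenvector of T_{n,r} with y₁ the entry on a part of size ⌊n/r⌋. Then 1/n ≤ y₁² < 1/(n−2). -/

import Mathlib

open SimpleGraph Finset

lemma count_mod_lb (n r c : ℕ) (hc : c < r) :
    n / r ≤ ((Finset.range n).filter (fun m => m % r = c)).card := by
  have hr : 0 < r := lt_of_le_of_lt (Nat.zero_le c) hc
  have := Finset.card_le_card_of_injOn (f := fun k => c + r * k)
    (s := Finset.range (n / r)) (t := (Finset.range n).filter (fun m => m % r = c))
    (fun k hk => by
      simp only [Finset.mem_coe, Finset.mem_range] at hk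
      have h1 : r * k + r ≤ r * (n / r) := by
        have := Nat.mul_le_mul_left r hk
        rw [Nat.mul_succ] at this; omega
      have h2 : r * (n / r) ≤ n := Nat.mul_div_le n r
      simp only [Finset.mem_coe, Finset.mem_filter, Finset.mem_range]
      exact ⟨by omega, by simp [Nat.add_mul_mod_self_left, Nat.mod_eq_of_lt hc]⟩)
    (fun a _ b _ hab => by
      simp only [add_right_inj] at hab
      exact Nat.eq_of_mul_eq_mul_left hr hab)
  simpa using this

lemma count_mod_ub (n r c : ℕ) (hc : c < r) :
    ((Finset.range n).filter (fun m => m % r = c)).card ≤ n / r + 1 := by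
  have hr : 0 < r := lt_of_le_of_lt (Nat.zero_le c) hc
  have := Finset.card_le_card_of_injOn (f := fun m => m / r)
    (s := (Finset.range n).filter (fun m => m % r = c))
    (t := Finset.range (n / r + 1))
    (fun m hm => by
      simp only [Finset.mem_coe, Finset.mem_filter, Finset.mem_range] at hm ⊢
      have := Nat.div_le_div_right (c := r) (Nat.le_of_lt hm.1)
      omega)
    (fun a ha b hb hab => by
      simp only [Finset.mem_coe, Finset.mem_filter, Finset.mem_range] at ha hb
      have ha2 := Nat.div_add_mod a r
      have hb2 := Nat.div_add_mod b r
      have : r * (a / r) = r * (b / r) := by simp only [] at hab; rw [hab]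
      omega)
  simpa using this

lemma fin_count_eq (n r c : ℕ) :
    (Finset.univ.filter (fun v : Fin n => v.val % r = c)).card
      = ((Finset.range n).filter (fun m => m % r = c)).card := by
  classical
  rw [Finset.card_filter, Finset.card_filter]
  exact Fin.sum_univ_eq_sum_range (fun m => if m % r = c then 1 else 0) n

/-- If `y` is the positive unit Perron eigenvector of the Turán graph `T_{n,r}` and `y₁`
is its common value on a part of size `⌊n/r⌋`, then `1/n ≤ y₁² < 1/(n-2)`. -/
theorem turan_perron_entry_sq (r : ℕ) (hr : 2 ≤ r) :
    ∃ N : ℕ, ∀ n ≥ N, ∀ (ρ : ℝ) (y : Fin n → ℝ),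
      (∀ v, 0 < y v) → (∑ v : Fin n, y v ^ 2 = 1) →
      ((turanGraph n r).adjMatrix ℝ).mulVec y = ρ • y →
      ∀ c₁ : ℕ, c₁ < r →
      (univ.filter (fun v : Fin n => v.val % r = c₁)).card = n / r →
      ∀ y₁ : ℝ, (∀ v : Fin n, v.val % r = c₁ → y v = y₁) →
      1 / (n : ℝ) ≤ y₁ ^ 2 ∧ y₁ ^ 2 < 1 / ((n : ℝ) - 2) := by
  classical
  refine ⟨3 * r, fun n hn ρ y hy hsum heig c₁ hc₁ hcard y₁ hy₁ => ?_⟩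
  have hr0 : 0 < r := by omega
  have hn6 : 6 ≤ n := by omega
  have hq3 : 3 ≤ n / r := (Nat.le_div_iff_mul_le hr0).2 (by omega)
  set q : ℕ := n / r with hq
  set S : ℝ := ∑ v : Fin n, y v with hS
  set T : ℕ → ℝ := fun c => ∑ w ∈ univ.filter (fun w : Fin n => w.val % r = c), y w with hT
  set K : ℕ → ℕ := fun c => (univ.filter (fun v : Fin n => v.val % r = c)).card with hK
  -- eigen equation per vertex
  have key : ∀ v : Fin n, ρ * y v = S - T (v.val % r) := by
    intro v
    have h1 : ((turanGraph n r).adjMatrix ℝ).mulVec y v = ρ * y v := by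
      rw [heig]; rfl
    rw [adjMatrix_mulVec_apply] at h1
    have h2 : (turanGraph n r).neighborFinset v
        = univ.filter (fun w : Fin n => ¬ (w.val % r = v.val % r)) := by
      ext w
      rw [mem_neighborFinset]
      simp only [mem_filter, mem_univ, true_and]
      exact ⟨fun h h' => h h'.symm, fun h h' => h h'.symm⟩
    rw [h2] at h1
    have h3 := Finset.sum_filter_add_sum_filter_not univ
      (fun w : Fin n => w.val % r = v.val % r) y
    have h4 : T (v.val % r)
        = ∑ w ∈ univ.filter (fun w : Fin n => w.val % r = v.val % r), y w := rfl
    rw [← h1, h4, hS]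
    linarith [h3]
  -- ρ is positive
  have hrho : 0 < ρ := by
    have v0 : Fin n := ⟨0, by omega⟩
    have hv0 : (⟨0, by omega⟩ : Fin n).val % r = 0 := by simp
    have h1 := key ⟨0, by omega⟩
    have hpos : 0 < S - T ((⟨0, by omega⟩ : Fin n).val % r) := by
      rw [hS, hT]
      have h5 := Finset.sum_filter_add_sum_filter_not univ
        (fun w : Fin n => w.val % r = (⟨0, by omega⟩ : Fin n).val % r) y
      have h6 : 0 < ∑ w ∈ univ.filter
          (fun w : Fin n => ¬ (w.val % r = (⟨0, by omega⟩ : Fin n).val % r)), y w := by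
        apply Finset.sum_pos (fun i _ => hy i)
        refine ⟨⟨1, by omega⟩, ?_⟩
        simp only [mem_filter, mem_univ, true_and]
        simp [Nat.mod_eq_of_lt (show 1 < r by omega)]
      linarith [h5, h6]
    nlinarith [hy (⟨0, by omega⟩ : Fin n), h1, hpos]
  -- y is constant on residue classes
  have hconst : ∀ v w : Fin n, v.val % r = w.val % r → y v = y w := by
    intro v w h
    have h1 := key v
    have h2 := key w
    rw [h] at h1
    exact mul_left_cancel₀ (ne_of_gt hrho) (by linarith)
  -- class sums
  have hTc : ∀ v : Fin n, T (v.val % r) = (K (v.val % r) : ℝ) * y v := by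
    intro v
    have h4 : T (v.val % r)
        = ∑ w ∈ univ.filter (fun w : Fin n => w.val % r = v.val % r), y w := rfl
    rw [h4]
    rw [Finset.sum_congr rfl (fun w hw => hconst w v (by simpa using hw))]
    rw [Finset.sum_const, nsmul_eq_mul]
  have master : ∀ v : Fin n, (ρ + (K (v.val % r) : ℝ)) * y v = S := by
    intro v
    have h1 := key v
    rw [hTc v] at h1
    linarith [h1]
  -- class size bounds
  have hKlb : ∀ v : Fin n, (q : ℝ) ≤ (K (v.val % r) : ℝ) := by
    intro v
    have l := count_mod_lb n r (v.val % r) (Nat.mod_lt _ hr0)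
    have h3 : q ≤ K (v.val % r) := by
      show q ≤ (univ.filter (fun w : Fin n => w.val % r = v.val % r)).card
      rw [fin_count_eq]; exact l
    exact_mod_cast h3
  have hKub : ∀ v : Fin n, (K (v.val % r) : ℝ) ≤ (q : ℝ) + 1 := by
    intro v
    have l := count_mod_ub n r (v.val % r) (Nat.mod_lt _ hr0)
    have h3 : K (v.val % r) ≤ q + 1 := by
      show (univ.filter (fun w : Fin n => w.val % r = v.val % r)).card ≤ q + 1
      rw [fin_count_eq]; exact l
    exact_mod_cast h3
  -- a vertex in class c₁
  obtain ⟨v₁, hv₁⟩ := Finset.card_pos.mp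
    (show 0 < (univ.filter (fun v : Fin n => v.val % r = c₁)).card by omega)
  have hv₁c : v₁.val % r = c₁ := by simpa using hv₁
  have hy₁v : y v₁ = y₁ := hy₁ v₁ hv₁c
  have hy₁pos : 0 < y₁ := hy₁v ▸ hy v₁
  have hKc₁ : (K (v₁.val % r) : ℝ) = q := by
    rw [hK, hv₁c]; exact_mod_cast congrArg Nat.cast hcard
  set β : ℝ := ρ + (q : ℝ) with hβ
  have hβpos : 0 < β := by positivity
  have hSy₁ : β * y₁ = S := by
    have := master v₁; rw [hKc₁, hy₁v] at this; exact this
  -- per-vertex bounds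
  have hyv_le : ∀ v : Fin n, y v ≤ y₁ := by
    intro v
    have h1 := master v
    nlinarith [hKlb v, hy v, hSy₁, hβpos]
  have hyv_ge : ∀ v : Fin n, β * y₁ ≤ (β + 1) * y v := by
    intro v
    have h1 := master v
    nlinarith [hKub v, hy v, hSy₁]
  -- β ≥ n - 1
  have hβn : (n : ℝ) - 1 ≤ β := by
    have h1 : ∑ v : Fin n, β * y₁ ≤ ∑ v : Fin n, (β + 1) * y v :=
      Finset.sum_le_sum (fun v _ => hyv_ge v)
    rw [Finset.sum_const, Finset.card_univ, Fintype.card_fin, nsmul_eq_mul,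
      ← Finset.mul_sum, ← hS] at h1
    nlinarith [h1, hSy₁, mul_pos hβpos hy₁pos]
  -- lower bound
  have hub : (1 : ℝ) ≤ (n : ℝ) * y₁ ^ 2 := by
    have h1 : ∑ v : Fin n, y v ^ 2 ≤ ∑ v : Fin n, y₁ ^ 2 :=
      Finset.sum_le_sum (fun v _ => pow_le_pow_left₀ (hy v).le (hyv_le v) 2)
    rw [hsum, Finset.sum_const, Finset.card_univ, Fintype.card_fin, nsmul_eq_mul] at h1
    exact h1
  have hnpos : (0 : ℝ) < n := by positivity
  constructor
  · rw [div_le_iff₀ hnpos]; linarith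
  · -- upper bound
    have h1 : ∑ v : Fin n, (β * y₁) ^ 2 ≤ ∑ v : Fin n, ((β + 1) * y v) ^ 2 :=
      Finset.sum_le_sum (fun v _ => pow_le_pow_left₀
        (by positivity) (hyv_ge v) 2)
    have hL : ∑ v : Fin n, (β * y₁) ^ 2 = (n : ℝ) * (β * y₁) ^ 2 := by
      rw [Finset.sum_const, Finset.card_univ, Fintype.card_fin, nsmul_eq_mul]
    have hR : ∑ v : Fin n, ((β + 1) * y v) ^ 2 = (β + 1) ^ 2 := by
      calc ∑ v : Fin n, ((β + 1) * y v) ^ 2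
          = ∑ v : Fin n, (β + 1) ^ 2 * y v ^ 2 :=
            Finset.sum_congr rfl (fun v _ => by ring)
        _ = (β + 1) ^ 2 * ∑ v : Fin n, y v ^ 2 := by rw [Finset.mul_sum]
        _ = (β + 1) ^ 2 := by rw [hsum, mul_one]
    rw [hL, hR] at h1
    -- h1 : n * (β * y₁)^2 ≤ (β+1)^2
    have hn6' : (6 : ℝ) ≤ (n : ℝ) := by exact_mod_cast hn6
    have hβ1' : (1 : ℝ) ≤ β - ((n : ℝ) - 2) := by linarith
    have hprod : ((n : ℝ) - 1) * 1 ≤ β * (β - ((n : ℝ) - 2)) :=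
      mul_le_mul hβn hβ1' zero_le_one hβpos.le
    have hA : ((n : ℝ) - 2) * (β + 1) ^ 2 < (n : ℝ) * β ^ 2 := by nlinarith [hprod]
    have hkey : ((n : ℝ) - 2) * y₁ ^ 2 < 1 := by
      have hB : ((n:ℝ)-2) * ((n:ℝ) * (β*y₁)^2) ≤ ((n:ℝ)-2) * (β+1)^2 :=
        mul_le_mul_of_nonneg_left h1 (by linarith)
      have hC : ((n:ℝ)-2) * ((n:ℝ) * (β*y₁)^2) < (n:ℝ) * β^2 := lt_of_le_of_lt hB hA
      have hpos2 : (0:ℝ) < (n:ℝ) * β^2 := by positivity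
      have hF : ((n:ℝ)*β^2) * (((n:ℝ)-2)*y₁^2) < ((n:ℝ)*β^2) * 1 := by
        have e : ((n:ℝ)*β^2) * (((n:ℝ)-2)*y₁^2) = ((n:ℝ)-2) * ((n:ℝ) * (β*y₁)^2) := by
          ring
        rw [e, mul_one]
        exact hC
      exact lt_of_mul_lt_mul_left hF hpos2.le
    rw [lt_div_iff₀ (by linarith : (0:ℝ) < (n:ℝ) - 2)]
    linarith
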